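/- Let T be a t-norm and let R be a fuzzy T-equivalence on a set U with a dually well-ordered spectrum. If A, B ⊆ U satisfy μ_{[A]_R}(x) ≤ μ_{[B]_R}(x) and μ_{[A]^R}(x) ≤ μ_{[B]^R}(x) for all x ∈ U, then A_E ⊆ B_E and A^E ⊆ B^E; i.e., the map sending the crisp rough set (A_E, A^E) to the fuzzy rough set (μ_{[A]_R}, μ_{[A]^R}) reflects the order. -/
import Mathlib


open unitInterval

noncomputable section

instance : Fact ((0:ℝ) ≤ 1) := ⟨zero_le_one⟩

/-- A t-norm on the unit interval: commutative, associative, monotone in each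
argument, with `1` as unit. -/
def IsTnorm (T : I → I → I) : Prop :=
  (∀ x y, T x y = T y x) ∧
  (∀ x y z, T (T x y) z = T x (T y z)) ∧
  (∀ x₁ x₂ y, x₁ ≤ x₂ → T x₁ y ≤ T x₂ y) ∧
  (∀ x y₁ y₂, y₁ ≤ y₂ → T x y₁ ≤ T x y₂) ∧
  (∀ x, T x 1 = x)

/-- A fuzzy `T`-equivalence: reflexive, symmetric, `T`-transitive fuzzy relation. -/
def IsFuzzyTEquiv {U : Type*} (T : I → I → I) (μ : U → U → I) : Prop :=
  (∀ x, μ x x = 1) ∧ (∀ x y, μ x y = μ y x) ∧ (∀ x y z, T (μ x y) (μ y z) ≤ μ x z)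

/-- Fuzzy upper approximation of a crisp set `A`: `sup {μ x y | y ∈ A}` (`sup ∅ = 0`). -/
def upperApp {U : Type*} (μ : U → U → I) (A : Set U) (x : U) : I := sSup (μ x '' A)

/-- Fuzzy lower approximation of a crisp set `A`: `inf {1 - μ x y | y ∉ A}` (`inf ∅ = 1`). -/
def lowerApp {U : Type*} (μ : U → U → I) (A : Set U) (x : U) : I :=
  sInf ((fun y => σ (μ x y)) '' Aᶜ)

/-- The spectrum of a fuzzy relation. -/
def fuzzySpectrum {U : Type*} (μ : U → U → I) : Set I := {r | ∃ x y, μ x y = r}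

/-- `R` has a dually well-ordered spectrum: every nonempty subset of the
spectrum has a greatest element. -/
def DuallyWellOrdered {U : Type*} (μ : U → U → I) : Prop :=
  ∀ s ⊆ fuzzySpectrum μ, s.Nonempty → ∃ m ∈ s, ∀ r ∈ s, r ≤ m

/-- Upper approximation by the crisp equivalence `E = {(x,y) | μ x y = 1}`. -/
def upperE {U : Type*} (μ : U → U → I) (A : Set U) : Set U :=
  {x | ({y | μ x y = 1} ∩ A).Nonempty}

/-- Lower approximation by the crisp equivalence `E = {(x,y) | μ x y = 1}`. -/
def lowerE {U : Type*} (μ : U → U → I) (A : Set U) : Set U :=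
  {x | {y | μ x y = 1} ⊆ A}

/-- Upper approximation by the support relation `S = {(x,y) | μ x y > 0}`. -/
def upperS {U : Type*} (μ : U → U → I) (A : Set U) : Set U :=
  {x | ({y | 0 < μ x y} ∩ A).Nonempty}

/-- Lower approximation by the support relation `S = {(x,y) | μ x y > 0}`. -/
def lowerS {U : Type*} (μ : U → U → I) (A : Set U) : Set U :=
  {x | {y | 0 < μ x y} ⊆ A}

/-- the map `(A_E, A^E) ↦ (μ_[A]_R, μ_[A]^R)` reflects the order. -/
theorem stmt9 {U : Type*} (T : I → I → I) (μ : U → U → I)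
    (hT : IsTnorm T) (hR : IsFuzzyTEquiv T μ) (hD : DuallyWellOrdered μ)
    (A B : Set U)
    (h : ∀ x : U, lowerApp μ A x ≤ lowerApp μ B x ∧ upperApp μ A x ≤ upperApp μ B x) :
    lowerE μ A ⊆ lowerE μ B ∧ upperE μ A ⊆ upperE μ B := by
  constructor
  · intro x hx
    -- lowerApp μ A x > 0
    have hpos : 0 < lowerApp μ A x := by
      rcases Set.eq_empty_or_nonempty (Aᶜ) with hc | hc
      · have : lowerApp μ A x = 1 := by
          rw [lowerApp, hc, Set.image_empty, sInf_empty]; rfl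
        rw [this]; exact zero_lt_one' I
      · obtain ⟨m, hm, hmax⟩ := hD ((fun y => μ x y) '' Aᶜ)
          (by rintro r ⟨y, _, rfl⟩; exact ⟨x, y, rfl⟩)
          (hc.image _)
        obtain ⟨y, hy, rfl⟩ := hm
        have hne1 : μ x y ≠ 1 := fun h1 => hy (hx h1)
        have hlt : μ x y < 1 := lt_of_le_of_ne le_one' hne1
        have hσ : (0 : I) < σ (μ x y) := by
          rw [show (0:I) = σ 1 from (symm_one).symm]
          exact symm_lt_symm.mpr hlt
        refine lt_of_lt_of_le hσ (le_sInf ?_)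
        rintro r ⟨z, hz, rfl⟩
        exact symm_le_symm.mpr (hmax _ ⟨z, hz, rfl⟩)
    have hposB : 0 < lowerApp μ B x := lt_of_lt_of_le hpos (h x).1
    intro y hy
    by_contra hyB
    have : lowerApp μ B x ≤ σ (μ x y) := sInf_le ⟨y, hyB, rfl⟩
    rw [Set.mem_setOf_eq] at hy
    rw [hy, symm_one] at this
    exact absurd this (not_le.mpr hposB)
  · intro x hx
    obtain ⟨y, hy1, hyA⟩ := hx
    have hA1 : upperApp μ A x = 1 := by
      apply le_antisymm le_one'
      calc (1:I) = μ x y := hy1.symm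
        _ ≤ sSup (μ x '' A) := le_sSup ⟨y, hyA, rfl⟩
    have hB1 : upperApp μ B x = 1 :=
      le_antisymm le_one' (hA1 ▸ (h x).2)
    have hBne : ((μ x '' B)).Nonempty := by
      rcases Set.eq_empty_or_nonempty B with hb | hb
      · exfalso
        have : upperApp μ B x = 0 := by
          rw [upperApp, hb, Set.image_empty, sSup_empty]; rfl
        rw [this] at hB1
        exact zero_ne_one hB1
      · exact hb.image _
    obtain ⟨m, hm, hmax⟩ := hD (μ x '' B)
      (by rintro r ⟨z, _, rfl⟩; exact ⟨x, z, rfl⟩) hBne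
    have hm1 : m = 1 := by
      apply le_antisymm le_one'
      calc (1:I) = upperApp μ B x := hB1.symm
        _ ≤ m := sSup_le hmax
    obtain ⟨z, hz, rfl⟩ := hm
    exact ⟨z, hm1, hz⟩
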